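/- (SLLN for the local clustering coefficient) Let C_n(1) = T_n(1)/V_n(1) if V_n(1) ≥ 1 and C_n(1) = w otherwise, where T_n(1) and V_n(1) count triangles and connected neighbor-pairs at vertex 1 in the random graph on n vertices. Then C_n(1) converges almost surely to C(1) := E_T(X_1)/E_D(X_1)^2 · I{E_D(X_1) > 0} + w · I{E_D(X_1) = 0}. -/

import Mathlib

open MeasureTheory ProbabilityTheory Finset Filter
open scoped Classical

lemma aux_integrable_of_abs_le {α : Type*} [MeasurableSpace α] (m : Measure α) [IsFiniteMeasure m]
    {f : α → ℝ} (hf : AEStronglyMeasurable f m) (h : ∀ a, |f a| ≤ 1) : Integrable f m :=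
  (integrable_const (1:ℝ)).mono' hf (ae_of_all _ (by simpa [Real.norm_eq_abs] using h))

lemma aux_double_sum {M : Type*} [AddCommMonoid M] (f : ℕ → ℕ → M) (n : ℕ) :
    ∑ j ∈ Finset.Ioo 0 n, ∑ k ∈ Finset.Ioo j n, f j k
      = ∑ p ∈ (Finset.Ioo 0 n ×ˢ Finset.Ioo 0 n).filter (fun p => p.1 < p.2), f p.1 p.2 := by
  rw [Finset.sum_filter, Finset.sum_product]
  refine Finset.sum_congr rfl fun j hj => ?_
  rw [← Finset.sum_filter]
  congr 1
  ext k
  simp only [Finset.mem_filter, Finset.mem_Ioo] at *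
  omega

lemma aux_card (n : ℕ) :
    ((Finset.Ioo 0 n ×ˢ Finset.Ioo 0 n).filter (fun p => p.1 < p.2)).card * 2
      = (n-1) * (n-2) := by
  have h1 : ((Finset.Ioo 0 n ×ˢ Finset.Ioo 0 n).filter (fun p => p.1 < p.2)).card
      = ∑ j ∈ Finset.Ioo 0 n, ∑ k ∈ Finset.Ioo j n, (1:ℕ) := by
    rw [Finset.card_eq_sum_ones]
    exact (aux_double_sum (fun _ _ => (1:ℕ)) n).symm
  rw [h1]
  have h2 : ∀ j, ∑ k ∈ Finset.Ioo j n, (1:ℕ) = n - j - 1 := by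
    intro j; rw [Finset.sum_const, Nat.card_Ioo]; simp
  simp only [h2]
  rw [show Finset.Ioo 0 n = Finset.Ico 1 n by ext i; simp only [Finset.mem_Ioo, Finset.mem_Ico]; omega,
    Finset.sum_Ico_eq_sum_range]
  have h3 : ∑ i ∈ Finset.range (n - 1), (n - (1 + i) - 1)
      = ∑ i ∈ Finset.range (n - 1), ((n-1) - 1 - i) := by
    refine Finset.sum_congr rfl fun i _ => ?_; omega
  rw [h3, Finset.sum_range_reflect (fun i => i) (n-1), Finset.sum_range_id_mul_two]
  congr 1

lemma aux_ratio_tendsto : Tendsto (fun k : ℕ => (((k:ℝ))^2)^2 / (((k:ℝ)+1)^2)^2) atTop (nhds 1) := by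
  have h0 : Tendsto (fun k : ℕ => (k:ℝ)/((k:ℝ)+1)) atTop (nhds 1) := by
    have h1 : Tendsto (fun k : ℕ => 1 - 1/((k:ℝ)+1)) atTop (nhds 1) := by
      have := tendsto_one_div_add_atTop_nhds_zero_nat (𝕜 := ℝ)
      simpa using tendsto_const_nhds.sub this
    refine h1.congr fun k => ?_
    have hk : ((k:ℝ)+1) ≠ 0 := by positivity
    field_simp
    ring
  have := (h0.pow 2).pow 2
  simp only [one_pow] at this
  refine this.congr fun k => ?_
  rw [div_pow, div_pow]

lemma aux_ratio_tendsto' : Tendsto (fun k : ℕ => (((k:ℝ)+1)^2)^2 / (((k:ℝ))^2)^2) atTop (nhds 1) := by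
  have h0 : Tendsto (fun k : ℕ => ((k:ℝ)+1)/(k:ℝ)) atTop (nhds 1) := by
    have h1 : Tendsto (fun k : ℕ => 1 + 1/(k:ℝ)) atTop (nhds 1) := by
      have := tendsto_one_div_atTop_nhds_zero_nat (𝕜 := ℝ)
      simpa using tendsto_const_nhds.add this
    refine Tendsto.congr' ?_ h1
    filter_upwards [eventually_ge_atTop 1] with k hk
    have hk : (k:ℝ) ≠ 0 := by positivity
    field_simp
  have := (h0.pow 2).pow 2
  simp only [one_pow] at this
  refine this.congr fun k => ?_
  rw [div_pow, div_pow]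

lemma aux_sqrt_tendsto : Tendsto (fun n : ℕ => Nat.sqrt n) atTop atTop := by
  refine tendsto_atTop_atTop.mpr fun b => ⟨b*b, fun n hn => ?_⟩
  calc b = Nat.sqrt (b*b) := (Nat.sqrt_eq b).symm
  _ ≤ Nat.sqrt n := Nat.sqrt_le_sqrt hn

lemma aux_sandwich (u : ℕ → ℝ) (hmono : Monotone u) (hpos : ∀ n, 0 ≤ u n) {L : ℝ}
    (hsub : Tendsto (fun k : ℕ => u (k^2) / ((k:ℝ)^2)^2) atTop (nhds L)) :
    Tendsto (fun n : ℕ => u n / (n:ℝ)^2) atTop (nhds L) := by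
  have hlow : Tendsto (fun k : ℕ => u (k^2) / (((k:ℝ)+1)^2)^2) atTop (nhds L) := by
    have h := hsub.mul aux_ratio_tendsto
    rw [mul_one] at h
    refine Tendsto.congr' ?_ h
    filter_upwards [eventually_ge_atTop 1] with k hk
    have hc : (((k:ℝ))^2)^2 ≠ 0 := by
      have : (0:ℝ) < k := by exact_mod_cast hk
      positivity
    rw [div_mul_div_comm, mul_comm (u (k^2)), mul_div_mul_left _ _ hc]
  have hup : Tendsto (fun k : ℕ => u ((k+1)^2) / (((k:ℝ))^2)^2) atTop (nhds L) := by
    have hshift : Tendsto (fun k : ℕ => u ((k+1)^2) / (((k:ℝ)+1)^2)^2) atTop (nhds L) := by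
      have h := hsub.comp (tendsto_add_atTop_nat 1)
      refine Tendsto.congr ?_ h
      intro k
      simp only [Function.comp_apply]
      push_cast
      ring_nf
    have h := hshift.mul aux_ratio_tendsto'
    rw [mul_one] at h
    refine Tendsto.congr' ?_ h
    filter_upwards [eventually_ge_atTop 1] with k hk
    have hc : (((k:ℝ)+1)^2)^2 ≠ 0 := by positivity
    rw [div_mul_div_comm, mul_comm (u ((k+1)^2)), mul_div_mul_left _ _ hc]
  have hlowc := hlow.comp aux_sqrt_tendsto
  have hupc := hup.comp aux_sqrt_tendsto
  refine tendsto_of_tendsto_of_tendsto_of_le_of_le' hlowc hupc ?_ ?_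
  · filter_upwards [eventually_ge_atTop 1] with n hn
    simp only [Function.comp_apply]
    set s := Nat.sqrt n with hs
    have hs1 : s^2 ≤ n := Nat.sqrt_le' n
    have hs2 : n < (s+1)^2 := Nat.lt_succ_sqrt' n
    have hnum : u (s^2) ≤ u n := hmono hs1
    have hd1 : (0:ℝ) < (n:ℝ)^2 := by
      have : (0:ℝ) < n := by exact_mod_cast hn
      positivity
    have hd2 : (n:ℝ)^2 ≤ (((s:ℝ)+1)^2)^2 := by
      have h : (n:ℝ) ≤ ((s:ℝ)+1)^2 := by exact_mod_cast hs2.le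
      exact pow_le_pow_left₀ (by positivity) h 2
    exact div_le_div₀ (hpos n) hnum hd1 hd2
  · filter_upwards [eventually_ge_atTop 1] with n hn
    simp only [Function.comp_apply]
    set s := Nat.sqrt n with hs
    have hspos : 1 ≤ s := by
      rw [hs]; exact Nat.sqrt_pos.mpr hn
    have hs1 : s^2 ≤ n := Nat.sqrt_le' n
    have hs2 : n ≤ (s+1)^2 := (Nat.lt_succ_sqrt' n).le
    have hnum : u n ≤ u ((s+1)^2) := hmono hs2
    have hd1 : (0:ℝ) < (((s:ℝ))^2)^2 := by
      have : (0:ℝ) < s := by exact_mod_cast hspos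
      positivity
    have hd2 : (((s:ℝ))^2)^2 ≤ (n:ℝ)^2 := by
      have : ((s:ℝ))^2 ≤ (n:ℝ) := by exact_mod_cast hs1
      exact pow_le_pow_left₀ (by positivity) this 2
    exact div_le_div₀ (hpos _) hnum hd1 hd2

lemma aux_summable_shift : Summable (fun k : ℕ => 1/((k:ℝ)+1)^2) := by
  have h := (summable_nat_add_iff (f := fun n : ℕ => 1/(n:ℝ)^2) 1).mpr
    (Real.summable_one_div_nat_pow.mpr one_lt_two)
  refine h.congr fun k => ?_
  push_cast
  ring

lemma aux_subseq_tendsto {Ω : Type*} [MeasurableSpace Ω] (P : Measure Ω) [IsProbabilityMeasure P]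
    (R : ℕ → Ω → ℝ) (hint : ∀ k, Integrable (fun ω => (R k ω)^2) P)
    (c : ℝ) (hc : 0 ≤ c) (hvar : ∀ k, 1 ≤ k → ∫ ω, (R k ω)^2 ∂P ≤ c / (k:ℝ)^2) :
    ∀ᵐ ω ∂P, Tendsto (fun k => R k ω) atTop (nhds 0) := by
  have hbc : ∀ m : ℕ, ∀ᵐ ω ∂P, ∀ᶠ k in atTop, |R k ω| < 1/((m:ℝ)+1) := by
    intro m
    set ε : ℝ := 1/((m:ℝ)+1) with hε_def
    have hε : 0 < ε := by positivity
    have hP : ∀ k : ℕ, 1 ≤ k → P {ω | ε ≤ |R k ω|} ≤ ENNReal.ofReal ((c/ε^2) / (k:ℝ)^2) := by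
      intro k hk
      have key := mul_meas_ge_le_integral_of_nonneg
        (ae_of_all P (fun ω => sq_nonneg (R k ω))) (hint k) (ε^2)
      have hsub : {ω | ε ≤ |R k ω|} ⊆ {ω | ε^2 ≤ (R k ω)^2} := by
        intro ω hω
        simp only [Set.mem_setOf_eq] at *
        calc ε^2 ≤ |R k ω|^2 := pow_le_pow_left₀ hε.le hω 2
        _ = (R k ω)^2 := sq_abs _
      have h1 : P {ω | ε ≤ |R k ω|} ≤ P {ω | ε^2 ≤ (R k ω)^2} := measure_mono hsub
      have h2 : (P {ω | ε^2 ≤ (R k ω)^2}).toReal ≤ (c / (k:ℝ)^2) / ε^2 := by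
        rw [le_div_iff₀ (by positivity)]
        calc (P {ω | ε^2 ≤ (R k ω)^2}).toReal * ε^2
            = ε^2 * (P {ω | ε^2 ≤ (R k ω)^2}).toReal := by ring
        _ ≤ ∫ ω, (R k ω)^2 ∂P := key
        _ ≤ c / (k:ℝ)^2 := hvar k hk
      have h3 : P {ω | ε^2 ≤ (R k ω)^2} ≤ ENNReal.ofReal ((c/ε^2) / (k:ℝ)^2) := by
        rw [← ENNReal.ofReal_toReal (measure_ne_top P _)]
        refine ENNReal.ofReal_le_ofReal ?_
        calc (P {ω | ε^2 ≤ (R k ω)^2}).toReal ≤ (c / (k:ℝ)^2) / ε^2 := h2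
        _ = (c/ε^2) / (k:ℝ)^2 := by rw [div_div, div_div, mul_comm]
      exact h1.trans h3
    set C : ℝ := c/ε^2*4 + 1 with hC_def
    have hC0 : 0 ≤ c/ε^2 := by positivity
    have hCb : ∀ k : ℕ, P {ω | ε ≤ |R k ω|} ≤ ENNReal.ofReal (C * (1/((k:ℝ)+1)^2)) := by
      intro k
      rcases Nat.eq_zero_or_pos k with hk | hk
      · subst hk
        have hgoal : (1:ENNReal) ≤ ENNReal.ofReal (C * (1/(((0:ℕ):ℝ)+1)^2)) := by
          rw [ENNReal.one_le_ofReal, hC_def]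
          norm_num
          positivity
        exact prob_le_one.trans hgoal
      · refine (hP k hk).trans (ENNReal.ofReal_le_ofReal ?_)
        have hk' : (1:ℝ) ≤ (k:ℝ) := by exact_mod_cast hk
        have h1 : C * (1/((k:ℝ)+1)^2) = C / ((k:ℝ)+1)^2 := by ring
        rw [h1, div_le_div_iff₀ (by positivity) (by positivity), hC_def]
        nlinarith [mul_nonneg hC0 (mul_nonneg (by linarith : (0:ℝ) ≤ 3*(k:ℝ)+1)
          (by linarith : (0:ℝ) ≤ (k:ℝ)-1)), hC0, hk']
    have hsum : ∑' k : ℕ, P {ω | ε ≤ |R k ω|} ≠ ⊤ := by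
      have hsummable : Summable (fun k : ℕ => C * (1/((k:ℝ)+1)^2)) :=
        aux_summable_shift.mul_left C
      have hnonneg : ∀ k : ℕ, 0 ≤ C * (1/((k:ℝ)+1)^2) := by
        intro k
        have : (0:ℝ) ≤ C := by rw [hC_def]; positivity
        positivity
      have h := ENNReal.ofReal_tsum_of_nonneg hnonneg hsummable
      refine ne_top_of_le_ne_top ?_ (ENNReal.tsum_le_tsum hCb)
      rw [← h]
      exact ENNReal.ofReal_ne_top
    have BC := measure_setOf_frequently_eq_zero (μ := P) (p := fun k ω => ε ≤ |R k ω|) hsum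
    rw [ae_iff]
    convert BC using 2
    ext ω
    simp only [Set.mem_setOf_eq, not_eventually, not_lt]
  have hAll := ae_all_iff.mpr hbc
  filter_upwards [hAll] with ω hω
  refine Metric.tendsto_atTop.mpr fun ε' hε' => ?_
  obtain ⟨m, hm⟩ := exists_nat_one_div_lt hε'
  obtain ⟨N, hN⟩ := eventually_atTop.mp (hω m)
  exact ⟨N, fun n hn => by rw [Real.dist_eq, sub_zero]; exact lt_trans (hN n hn) hm⟩

lemma uslln {Ω : Type*} [MeasurableSpace Ω] (P : Measure Ω) [IsProbabilityMeasure P]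
    (W : ℕ → Ω → ℝ) (hW : ∀ i, Measurable (W i))
    (hindep : iIndepFun W P)
    (μ : Measure ℝ) [IsProbabilityMeasure μ] (hlaw : ∀ i, P.map (W i) = μ)
    (H : ℝ → ℝ → ℝ) (hH : Measurable fun p : ℝ × ℝ => H p.1 p.2)
    (hH0 : ∀ y z, 0 ≤ H y z) (hH1 : ∀ y z, H y z ≤ 1) :
    ∀ᵐ ω ∂P, Tendsto (fun n : ℕ =>
        (∑ j ∈ Finset.Ioo 0 n, ∑ k ∈ Finset.Ioo j n, H (W j ω) (W k ω)) / (n:ℝ)^2)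
      atTop (nhds ((∫ y, ∫ z, H y z ∂μ ∂μ)/2)) := by
  set θ : ℝ := ∫ y, ∫ z, H y z ∂μ ∂μ with hθ_def
  have hHb : ∀ y z, |H y z| ≤ 1 := fun y z => by
    rw [abs_of_nonneg (hH0 y z)]; exact hH1 y z
  have hInt_prod : Integrable (fun p : ℝ×ℝ => H p.1 p.2) (μ.prod μ) :=
    aux_integrable_of_abs_le _ hH.aestronglyMeasurable (fun p => hHb _ _)
  have hθ0 : 0 ≤ θ := integral_nonneg fun y => integral_nonneg fun z => hH0 y z
  have hθ1 : θ ≤ 1 := by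
    have hsec : ∀ y : ℝ, Measurable (fun z => H y z) := fun y =>
      hH.comp (measurable_const.prodMk measurable_id)
    have hinner0 : ∀ y, 0 ≤ ∫ z, H y z ∂μ := fun y => integral_nonneg fun z => hH0 y z
    have hinner1 : ∀ y, ∫ z, H y z ∂μ ≤ 1 := by
      intro y
      calc ∫ z, H y z ∂μ ≤ ∫ _, (1:ℝ) ∂μ :=
            integral_mono (aux_integrable_of_abs_le _ (hsec y).aestronglyMeasurable
              (fun z => hHb y z)) (integrable_const 1) (fun z => hH1 y z)
      _ = 1 := by simp
    have hinnersm : StronglyMeasurable (fun y => ∫ z, H y z ∂μ) :=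
      hH.stronglyMeasurable.integral_prod_right'
    calc θ ≤ ∫ _, (1:ℝ) ∂μ :=
          integral_mono (aux_integrable_of_abs_le _ hinnersm.aestronglyMeasurable
            (fun y => abs_le.mpr ⟨by linarith [hinner0 y], hinner1 y⟩))
            (integrable_const 1) (fun y => hinner1 y)
    _ = 1 := by simp
  have hmean : ∀ a b : ℕ, a ≠ b → ∫ ω, H (W a ω) (W b ω) ∂P = θ := by
    intro a b hab
    have hmeas : AEMeasurable (fun ω => (W a ω, W b ω)) P := ((hW a).prodMk (hW b)).aemeasurable
    have hpair : P.map (fun ω => (W a ω, W b ω)) = μ.prod μ := by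
      have h := (indepFun_iff_map_prod_eq_prod_map_map (hW a).aemeasurable
        (hW b).aemeasurable).mp (hindep.indepFun hab)
      rw [hlaw, hlaw] at h
      exact h
    calc ∫ ω, H (W a ω) (W b ω) ∂P
        = ∫ p : ℝ×ℝ, H p.1 p.2 ∂(P.map (fun ω => (W a ω, W b ω))) :=
          (integral_map hmeas hH.aestronglyMeasurable).symm
    _ = ∫ p : ℝ×ℝ, H p.1 p.2 ∂(μ.prod μ) := by rw [hpair]
    _ = θ := integral_prod _ hInt_prod
  -- terms
  set t : ℕ×ℕ → Ω → ℝ := fun p ω => H (W p.1 ω) (W p.2 ω) with ht_def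
  set c : ℕ×ℕ → Ω → ℝ := fun p ω => H (W p.1 ω) (W p.2 ω) - θ with hc_def
  have htmeas : ∀ p, Measurable (t p) := fun p => hH.comp ((hW p.1).prodMk (hW p.2))
  have htint : ∀ p, Integrable (t p) P := fun p =>
    aux_integrable_of_abs_le _ (htmeas p).aestronglyMeasurable (fun ω => hHb _ _)
  have hcmeas : ∀ p, Measurable (c p) := fun p => (htmeas p).sub measurable_const
  have hcint : ∀ p, Integrable (c p) P := fun p => (htint p).sub (integrable_const θ)
  have hcabs : ∀ p ω, |c p ω| ≤ 1 := fun p ω => abs_le.mpr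
    ⟨by simp only [hc_def]; linarith [hH0 (W p.1 ω) (W p.2 ω)],
     by simp only [hc_def]; linarith [hH1 (W p.1 ω) (W p.2 ω)]⟩
  have hczero : ∀ p : ℕ×ℕ, p.1 ≠ p.2 → ∫ ω, c p ω ∂P = 0 := by
    intro p hp
    have : ∫ ω, c p ω ∂P = (∫ ω, t p ω ∂P) - ∫ _, θ ∂P :=
      integral_sub (htint p) (integrable_const θ)
    rw [this, hmean p.1 p.2 hp]
    simp
  have hmul_int : ∀ p q : ℕ×ℕ, Integrable (fun ω => c p ω * c q ω) P := by
    intro p q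
    refine aux_integrable_of_abs_le _ ((hcmeas p).mul (hcmeas q)).aestronglyMeasurable ?_
    intro ω
    rw [abs_mul]
    exact mul_le_one₀ (hcabs p ω) (abs_nonneg _) (hcabs q ω)
  set E : ℕ → Finset (ℕ×ℕ) := fun n => (Finset.Ioo 0 n ×ˢ Finset.Ioo 0 n).filter
    (fun p => p.1 < p.2) with hE_def
  have hEne : ∀ n, ∀ p ∈ E n, p.1 ≠ p.2 := by
    intro n p hp
    simp only [hE_def, Finset.mem_filter] at hp
    exact Nat.ne_of_lt hp.2
  have hEcard : ∀ n, (E n).card ≤ n*n := by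
    intro n
    calc (E n).card ≤ (Finset.Ioo 0 n ×ˢ Finset.Ioo 0 n).card := Finset.card_filter_le _ _
    _ = (Finset.Ioo 0 n).card * (Finset.Ioo 0 n).card := Finset.card_product _ _
    _ ≤ n * n := Nat.mul_le_mul (by rw [Nat.card_Ioo]; omega) (by rw [Nat.card_Ioo]; omega)
  -- variance bound
  have hvar : ∀ n : ℕ, ∫ ω, (∑ p ∈ E n, c p ω)^2 ∂P ≤ 4*(n:ℝ)^3 := by
    intro n
    have step1 : ∫ ω, (∑ p ∈ E n, c p ω)^2 ∂P
        = ∑ p ∈ E n, ∑ q ∈ E n, ∫ ω, c p ω * c q ω ∂P := by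
      have hexp : ∀ ω, (∑ p ∈ E n, c p ω)^2 = ∑ p ∈ E n, ∑ q ∈ E n, c p ω * c q ω := by
        intro ω; rw [sq, Finset.sum_mul_sum]
      simp_rw [hexp]
      rw [integral_finset_sum _ (fun p _ =>
        integrable_finset_sum _ (fun q _ => hmul_int p q))]
      exact Finset.sum_congr rfl fun p _ => integral_finset_sum _ (fun q _ => hmul_int p q)
    have step2 : ∑ p ∈ E n, ∑ q ∈ E n, ∫ ω, c p ω * c q ω ∂P
        ≤ ∑ p ∈ E n, ∑ q ∈ E n,
          (if p.1 = q.1 ∨ p.1 = q.2 ∨ p.2 = q.1 ∨ p.2 = q.2 then (1:ℝ) else 0) := by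
      refine Finset.sum_le_sum fun p hp => Finset.sum_le_sum fun q hq => ?_
      by_cases htouch : p.1 = q.1 ∨ p.1 = q.2 ∨ p.2 = q.1 ∨ p.2 = q.2
      · rw [if_pos htouch]
        calc ∫ ω, c p ω * c q ω ∂P ≤ ∫ _, (1:ℝ) ∂P := by
              refine integral_mono (hmul_int p q) (integrable_const 1) fun ω => ?_
              calc c p ω * c q ω ≤ |c p ω * c q ω| := le_abs_self _
              _ ≤ 1 := by rw [abs_mul]; exact mul_le_one₀ (hcabs p ω) (abs_nonneg _) (hcabs q ω)
        _ = 1 := by simp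
      · rw [if_neg htouch]
        push_neg at htouch
        obtain ⟨h1, h2, h3, h4⟩ := htouch
        have hi := hindep.indepFun_prodMk_prodMk hW p.1 p.2 q.1 q.2 h1 h2 h3 h4
        set F : ℝ×ℝ → ℝ := fun r => H r.1 r.2 - θ with hF_def
        have hF : Measurable F := (hH.sub measurable_const)
        have hi2 : IndepFun (c p) (c q) P := hi.comp hF hF
        have := hi2.integral_mul_eq_mul_integral (hcint p).aestronglyMeasurable (hcint q).aestronglyMeasurable
        have heq : ∫ ω, c p ω * c q ω ∂P = (∫ ω, c p ω ∂P) * ∫ ω, c q ω ∂P := this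
        rw [heq, hczero p (hEne n p hp), zero_mul]
    have step3 : ∀ p ∈ E n, (∑ q ∈ E n,
        (if p.1 = q.1 ∨ p.1 = q.2 ∨ p.2 = q.1 ∨ p.2 = q.2 then (1:ℝ) else 0)) ≤ 4*(n:ℝ) := by
      intro p hp
      rw [Finset.sum_boole]
      have hsubset : (E n).filter (fun q => p.1 = q.1 ∨ p.1 = q.2 ∨ p.2 = q.1 ∨ p.2 = q.2)
          ⊆ (({p.1, p.2} : Finset ℕ) ×ˢ Finset.range n) ∪
            (Finset.range n ×ˢ ({p.1, p.2} : Finset ℕ)) := by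
        intro q hq
        simp only [hE_def, Finset.mem_filter, Finset.mem_product, Finset.mem_Ioo,
          Finset.mem_union, Finset.mem_insert, Finset.mem_singleton, Finset.mem_range] at hq ⊢
        omega
      have hcard : ((E n).filter
          (fun q => p.1 = q.1 ∨ p.1 = q.2 ∨ p.2 = q.1 ∨ p.2 = q.2)).card ≤ 4*n := by
        calc _ ≤ ((({p.1, p.2} : Finset ℕ) ×ˢ Finset.range n) ∪
            (Finset.range n ×ˢ ({p.1, p.2} : Finset ℕ))).card := Finset.card_le_card hsubset
        _ ≤ (({p.1, p.2} : Finset ℕ) ×ˢ Finset.range n).card +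
            (Finset.range n ×ˢ ({p.1, p.2} : Finset ℕ)).card := Finset.card_union_le _ _
        _ ≤ 2*n + n*2 := by
              rw [Finset.card_product, Finset.card_product, Finset.card_range]
              have h2 : ({p.1, p.2} : Finset ℕ).card ≤ 2 := Finset.card_insert_le _ _ |>.trans
                (by simp)
              exact Nat.add_le_add (Nat.mul_le_mul_right _ h2) (Nat.mul_le_mul_left _ h2)
        _ = 4*n := by ring
      exact_mod_cast hcard
    calc ∫ ω, (∑ p ∈ E n, c p ω)^2 ∂P
        ≤ ∑ p ∈ E n, ∑ q ∈ E n,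
          (if p.1 = q.1 ∨ p.1 = q.2 ∨ p.2 = q.1 ∨ p.2 = q.2 then (1:ℝ) else 0) :=
          step1 ▸ step2
    _ ≤ ∑ _p ∈ E n, 4*(n:ℝ) := Finset.sum_le_sum step3
    _ = ((E n).card : ℝ) * (4*(n:ℝ)) := by rw [Finset.sum_const, nsmul_eq_mul]
    _ ≤ ((n:ℝ)*(n:ℝ)) * (4*(n:ℝ)) := by
          refine mul_le_mul_of_nonneg_right ?_ (by positivity)
          exact_mod_cast hEcard n
    _ = 4*(n:ℝ)^3 := by ring
  -- mean and subsequence machinery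
  set U : ℕ → Ω → ℝ := fun n ω => ∑ p ∈ E n, t p ω with hU_def
  have hDev : ∀ n ω, U n ω - ((E n).card:ℝ)*θ = ∑ p ∈ E n, c p ω := by
    intro n ω
    simp only [hU_def, hc_def, ht_def, Finset.sum_sub_distrib, Finset.sum_const, nsmul_eq_mul]
  set R : ℕ → Ω → ℝ := fun k ω => (∑ p ∈ E (k^2), c p ω) / ((k:ℝ)^2)^2 with hR_def
  have hRint : ∀ k, Integrable (fun ω => (R k ω)^2) P := by
    intro k
    have hrw : (fun ω => (R k ω)^2) = fun ω =>
        (∑ p ∈ E (k^2), ∑ q ∈ E (k^2), c p ω * c q ω) / (((k:ℝ)^2)^2)^2 := by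
      funext ω
      simp only [hR_def]
      rw [div_pow, sq (∑ p ∈ E (k^2), c p ω), Finset.sum_mul_sum]
    rw [hrw]
    exact (integrable_finset_sum _ (fun p _ =>
      integrable_finset_sum _ (fun q _ => hmul_int p q))).div_const _
  have hRvar : ∀ k, 1 ≤ k → ∫ ω, (R k ω)^2 ∂P ≤ 4 / (k:ℝ)^2 := by
    intro k hk
    have hkpos : (0:ℝ) < k := by exact_mod_cast hk
    have h1 : ∫ ω, (R k ω)^2 ∂P = (∫ ω, (∑ p ∈ E (k^2), c p ω)^2 ∂P) / (((k:ℝ)^2)^2)^2 := by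
      simp only [hR_def, div_pow]
      exact integral_div ((((k:ℝ)^2)^2)^2) _
    rw [h1]
    have h2 := hvar (k^2)
    have hcast : 4*((k^2:ℕ):ℝ)^3 = 4*(k:ℝ)^6 := by push_cast; ring
    rw [hcast] at h2
    calc (∫ ω, (∑ p ∈ E (k^2), c p ω)^2 ∂P) / (((k:ℝ)^2)^2)^2
        ≤ (4*(k:ℝ)^6) / (((k:ℝ)^2)^2)^2 := by
          gcongr
    _ = 4 / (k:ℝ)^2 := by
          have : (((k:ℝ)^2)^2)^2 = (k:ℝ)^8 := by ring
          rw [this]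
          rw [div_eq_div_iff (by positivity) (by positivity)]
          ring
  have key := aux_subseq_tendsto P R hRint 4 (by norm_num) hRvar
  have hhalf : Tendsto (fun n : ℕ => ((E n).card:ℝ)/(n:ℝ)^2) atTop (nhds (1/2)) := by
    have h1 : Tendsto (fun n : ℕ => 1-1/(n:ℝ)) atTop (nhds 1) := by
      simpa using tendsto_const_nhds.sub (tendsto_one_div_atTop_nhds_zero_nat (𝕜 := ℝ))
    have h2 : Tendsto (fun n : ℕ => 1-2*(1/(n:ℝ))) atTop (nhds 1) := by
      simpa using tendsto_const_nhds.sub ((tendsto_one_div_atTop_nhds_zero_nat (𝕜 := ℝ)).const_mul 2)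
    have hg : Tendsto (fun n : ℕ => (1-1/(n:ℝ))*(1-2*(1/(n:ℝ)))/2) atTop (nhds (1/2)) := by
      have := (h1.mul h2).div_const 2
      simpa using this
    refine Tendsto.congr' ?_ hg
    filter_upwards [eventually_ge_atTop 2] with n hn
    have h1n : 1 ≤ n := by omega
    have hn0 : (0:ℝ) < (n:ℝ) := by
      have : 0 < n := by omega
      exact_mod_cast this
    have hcardr : ((E n).card : ℝ) * 2 = ((n:ℝ)-1)*((n:ℝ)-2) := by
      calc ((E n).card:ℝ)*2 = (((E n).card*2 : ℕ):ℝ) := by push_cast; ring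
      _ = (((n-1)*(n-2):ℕ):ℝ) := by exact_mod_cast congrArg Nat.cast (aux_card n)
      _ = ((n:ℝ)-1)*((n:ℝ)-2) := by
            rw [Nat.cast_mul, Nat.cast_sub h1n, Nat.cast_sub hn]
            push_cast
            ring
    have hcard' : ((E n).card : ℝ) = (((n:ℝ)-1)*((n:ℝ)-2))/2 := by linarith
    rw [hcard']
    have hne : (n:ℝ) ≠ 0 := ne_of_gt hn0
    field_simp
  have hmean_half : Tendsto (fun n : ℕ => ((E n).card:ℝ)*θ/(n:ℝ)^2) atTop (nhds (θ/2)) := by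
    have h := hhalf.mul_const θ
    have heq : (1:ℝ)/2*θ = θ/2 := by ring
    rw [heq] at h
    exact h.congr fun n => by ring
  filter_upwards [key] with ω hω
  have hsq : Tendsto (fun k : ℕ => k^2) atTop atTop :=
    tendsto_atTop_atTop.mpr fun b => ⟨b, fun n hn => le_trans hn (Nat.le_self_pow two_ne_zero n)⟩
  have hmc := hmean_half.comp hsq
  have hmc' : Tendsto (fun k : ℕ => ((E (k^2)).card:ℝ)*θ/((k:ℝ)^2)^2) atTop (nhds (θ/2)) := by
    refine hmc.congr fun k => ?_
    simp only [Function.comp_apply]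
    push_cast
    ring
  have hcomb := hω.add hmc'
  rw [zero_add] at hcomb
  have hsubseq : Tendsto (fun k : ℕ => U (k^2) ω / ((k:ℝ)^2)^2) atTop (nhds (θ/2)) := by
    refine hcomb.congr fun k => ?_
    simp only [hR_def]
    rw [← add_div]
    congr 1
    have := hDev (k^2) ω
    linarith
  have hmono : Monotone (fun n => U n ω) := by
    intro n m hnm
    simp only [hU_def, ht_def]
    refine Finset.sum_le_sum_of_subset_of_nonneg ?_ (fun p _ _ => hH0 _ _)
    simp only [hE_def]
    refine Finset.filter_subset_filter _ (Finset.product_subset_product ?_ ?_) <;>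
      exact Finset.Ioo_subset_Ioo le_rfl hnm
  have hpos : ∀ n, 0 ≤ U n ω := fun n => Finset.sum_nonneg fun p _ => hH0 _ _
  have hfinal := aux_sandwich (fun n => U n ω) hmono hpos hsubseq
  refine hfinal.congr fun n => ?_
  congr 1
  simp only [hU_def, ht_def, hE_def]
  exact (aux_double_sum (fun j k => H (W j ω) (W k ω)) n).symm

/-- SLLN for the local clustering coefficient.  In the random graph on
`n` vertices `0, 1, …, n-1` (vertex `0` plays the role of vertex `1` of the paper) with
edge rule `f_c(X_i, X_j) ∈ B`, the local clustering coefficient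
`C_n(1) = T_n(1)/V_n(1)` (with value `w` when `V_n(1) = 0`) converges almost surely to
`C(1) = E_T(X_1)/E_D(X_1)^2 · I{E_D(X_1) > 0} + w · I{E_D(X_1) = 0}`. -/
theorem stmt4
    {Ω : Type*} [MeasurableSpace Ω] (P : Measure Ω) [IsProbabilityMeasure P]
    (X : ℕ → Ω → ℝ) (hXmeas : ∀ i, Measurable (X i))
    (hindep : iIndepFun X P)
    (μ : Measure ℝ) [IsProbabilityMeasure μ]
    (hlaw : ∀ i, P.map (X i) = μ)
    (B : Set ℝ) (hB : MeasurableSet B)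
    (fc : ℝ → ℝ → ℝ)
    (hfcmeas : Measurable fun p : ℝ × ℝ => fc p.1 p.2)
    (hfcsym : ∀ a b, fc a b = fc b a)
    (w : ℝ)
    (ED ET : ℝ → ℝ)
    (hED : ∀ x, ED x = ∫ y, (if fc x y ∈ B then (1 : ℝ) else 0) ∂μ)
    (hET : ∀ x, ET x = ∫ y, ∫ z, (if fc x y ∈ B then (1 : ℝ) else 0) *
        (if fc y z ∈ B then (1 : ℝ) else 0) *
        (if fc z x ∈ B then (1 : ℝ) else 0) ∂μ ∂μ)
    (T V : ℕ → Ω → ℝ)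
    (hT : ∀ n ω, T n ω = ∑ j ∈ Finset.Ioo 0 n, ∑ k ∈ Finset.Ioo j n,
        (if fc (X 0 ω) (X j ω) ∈ B then (1 : ℝ) else 0) *
          (if fc (X j ω) (X k ω) ∈ B then (1 : ℝ) else 0) *
          (if fc (X k ω) (X 0 ω) ∈ B then (1 : ℝ) else 0))
    (hV : ∀ n ω, V n ω = ∑ j ∈ Finset.Ioo 0 n, ∑ k ∈ Finset.Ioo j n,
        (if fc (X 0 ω) (X j ω) ∈ B then (1 : ℝ) else 0) *
          (if fc (X 0 ω) (X k ω) ∈ B then (1 : ℝ) else 0)) :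
    ∀ᵐ ω ∂P, Tendsto (fun n : ℕ =>
        if 1 ≤ V n ω then T n ω / V n ω else w)
      atTop (nhds (if 0 < ED (X 0 ω) then ET (X 0 ω) / ED (X 0 ω) ^ 2 else w)) := by
  classical
  set I : ℝ → ℝ → ℝ := fun a b => if fc a b ∈ B then 1 else 0 with hI_def
  have hImeas : Measurable (fun p : ℝ × ℝ => I p.1 p.2) := by
    simp only [hI_def]
    exact Measurable.ite (hfcmeas hB) measurable_const measurable_const
  have hI0 : ∀ a b, 0 ≤ I a b := fun a b => by
    simp only [hI_def]; split <;> norm_num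
  have hI1 : ∀ a b, I a b ≤ 1 := fun a b => by
    simp only [hI_def]; split <;> norm_num
  -- measurability of ED and ET
  have hEDmeas : Measurable ED := by
    have heq : ED = fun x => ∫ y, I x y ∂μ := funext fun x => by
      rw [hED x]
    rw [heq]
    exact hImeas.stronglyMeasurable.integral_prod_right'.measurable
  have hETmeas : Measurable ET := by
    have hFmeas : Measurable (fun q : (ℝ × ℝ) × ℝ => I q.1.1 q.1.2 * I q.1.2 q.2 * I q.2 q.1.1) := by
      refine Measurable.mul (Measurable.mul ?_ ?_) ?_
      · exact hImeas.comp ((measurable_fst.fst).prodMk (measurable_fst.snd))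
      · exact hImeas.comp ((measurable_fst.snd).prodMk measurable_snd)
      · exact hImeas.comp (measurable_snd.prodMk (measurable_fst.fst))
    have hg : StronglyMeasurable (fun p : ℝ × ℝ =>
        ∫ z, I p.1 p.2 * I p.2 z * I z p.1 ∂μ) :=
      hFmeas.stronglyMeasurable.integral_prod_right'
    have heq : ET = fun x => ∫ y, (fun p : ℝ × ℝ => ∫ z, I p.1 p.2 * I p.2 z * I z p.1 ∂μ) (x, y) ∂μ :=
      funext fun x => by rw [hET x]
    rw [heq]
    exact hg.integral_prod_right'.measurable
  -- the shifted process
  set Y : Ω → (ℕ → ℝ) := fun ω j => X (j+1) ω with hY_def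
  have hYmeas : Measurable Y := measurable_pi_lambda _ (fun j => hXmeas (j+1))
  set ν : Measure (ℕ → ℝ) := P.map Y with hν_def
  haveI : IsProbabilityMeasure ν := Measure.isProbabilityMeasure_map hYmeas.aemeasurable
  -- independence of X 0 and Y
  have hindep01 : IndepFun (X 0) Y P := by
    have hiI : iIndep (fun i => MeasurableSpace.comap (X i) inferInstance) P :=
      (iIndepFun_iff_iIndep _ _ _).1 hindep
    have hle : ∀ i, MeasurableSpace.comap (X i) inferInstance ≤ _ := fun i => (hXmeas i).comap_le
    have h := indep_biSup_compl hle hiI {0}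
    rw [IndepFun_iff_Indep]
    refine indep_of_indep_of_le_left (indep_of_indep_of_le_right h ?_) ?_
    · -- comap Y ≤ ⨆ n ∈ {0}ᶜ, comap (X n)
      have hYm : @Measurable Ω (ℕ → ℝ)
          (⨆ n ∈ ({0}ᶜ : Set ℕ), MeasurableSpace.comap (X n) inferInstance) _ Y := by
        refine @measurable_pi_lambda Ω ℕ (fun _ => ℝ)
          (⨆ n ∈ ({0}ᶜ : Set ℕ), MeasurableSpace.comap (X n) inferInstance)
          (fun _ => inferInstance) Y (fun j => ?_)
        have h1 : Measurable[MeasurableSpace.comap (X (j+1)) inferInstance] (X (j+1)) :=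
          fun s hs => ⟨s, hs, rfl⟩
        exact h1.mono (le_biSup (fun n => MeasurableSpace.comap (X n) inferInstance)
          (by simp : (j+1) ∈ ({0}ᶜ : Set ℕ))) le_rfl
      exact hYm.comap_le
    · -- comap (X 0) ≤ ⨆ n ∈ {0}, comap (X n)
      exact le_biSup (fun n => MeasurableSpace.comap (X n) inferInstance)
        (by simp : (0:ℕ) ∈ ({0} : Set ℕ))
  have hmapΦ : P.map (fun ω => (X 0 ω, Y ω)) = μ.prod ν := by
    have h := (indepFun_iff_map_prod_eq_prod_map_map (hXmeas 0).aemeasurable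
      hYmeas.aemeasurable).mp hindep01
    rw [hlaw 0] at h
    exact h
  -- product-space functions
  set Tt : ℕ → ℝ × (ℕ → ℝ) → ℝ := fun n p => ∑ j ∈ Finset.Ioo 0 n, ∑ k ∈ Finset.Ioo j n,
    I p.1 (p.2 (j-1)) * I (p.2 (j-1)) (p.2 (k-1)) * I (p.2 (k-1)) p.1 with hTt_def
  set Vt : ℕ → ℝ × (ℕ → ℝ) → ℝ := fun n p => ∑ j ∈ Finset.Ioo 0 n, ∑ k ∈ Finset.Ioo j n,
    I p.1 (p.2 (j-1)) * I p.1 (p.2 (k-1)) with hVt_def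
  set Ct : ℕ → ℝ × (ℕ → ℝ) → ℝ := fun n p => if 1 ≤ Vt n p then Tt n p / Vt n p else w with hCt_def
  set Lf : ℝ × (ℕ → ℝ) → ℝ := fun p => if 0 < ED p.1 then ET p.1 / ED p.1 ^ 2 else w with hLf_def
  have hcoord : ∀ m : ℕ, Measurable (fun p : ℝ × (ℕ → ℝ) => p.2 m) :=
    fun m => (measurable_pi_apply m).comp measurable_snd
  have hIc : ∀ (f g : ℝ × (ℕ → ℝ) → ℝ), Measurable f → Measurable g →
      Measurable (fun p => I (f p) (g p)) :=
    fun f g hf hg => hImeas.comp (hf.prodMk hg)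
  have hTtmeas : ∀ n, Measurable (Tt n) := by
    intro n
    simp only [hTt_def]
    refine Finset.measurable_sum _ (fun j _ => Finset.measurable_sum _ (fun k _ => ?_))
    exact ((hIc _ _ measurable_fst (hcoord _)).mul (hIc _ _ (hcoord _) (hcoord _))).mul
      (hIc _ _ (hcoord _) measurable_fst)
  have hVtmeas : ∀ n, Measurable (Vt n) := by
    intro n
    simp only [hVt_def]
    refine Finset.measurable_sum _ (fun j _ => Finset.measurable_sum _ (fun k _ => ?_))
    exact (hIc _ _ measurable_fst (hcoord _)).mul (hIc _ _ measurable_fst (hcoord _))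
  have hCtmeas : ∀ n, Measurable (Ct n) := by
    intro n
    simp only [hCt_def]
    exact Measurable.ite (measurableSet_le measurable_const (hVtmeas n))
      ((hTtmeas n).div (hVtmeas n)) measurable_const
  have hLfmeas : Measurable Lf := by
    simp only [hLf_def]
    exact Measurable.ite (measurableSet_lt measurable_const (hEDmeas.comp measurable_fst))
      ((hETmeas.comp measurable_fst).div ((hEDmeas.comp measurable_fst).pow_const 2))
      measurable_const
  set G : Set (ℝ × (ℕ → ℝ)) := {p | Tendsto (fun n => Ct n p) atTop (nhds (Lf p))} with hG_def
  have hGmeas : MeasurableSet G := measurableSet_tendsto_fun hCtmeas hLfmeas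
  -- the conditional statement
  have hsection : ∀ x : ℝ, ∀ᵐ ω ∂P, (x, Y ω) ∈ G := by
    intro x
    have hd0 : 0 ≤ ED x := by
      rw [hED x]
      exact integral_nonneg (fun y => by split <;> norm_num)
    set HT : ℝ → ℝ → ℝ := fun y z => I x y * I y z * I z x with hHT_def
    set HV : ℝ → ℝ → ℝ := fun y z => I x y * I x z with hHV_def
    have hHTmeas : Measurable (fun p : ℝ×ℝ => HT p.1 p.2) := by
      simp only [hHT_def]
      refine Measurable.mul (Measurable.mul ?_ ?_) ?_
      · exact hImeas.comp (measurable_const.prodMk measurable_fst)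
      · exact hImeas
      · exact hImeas.comp (measurable_snd.prodMk measurable_const)
    have hHVmeas : Measurable (fun p : ℝ×ℝ => HV p.1 p.2) := by
      simp only [hHV_def]
      exact (hImeas.comp (measurable_const.prodMk measurable_fst)).mul
        (hImeas.comp (measurable_const.prodMk measurable_snd))
    have hHT0 : ∀ y z, 0 ≤ HT y z := fun y z => by
      simp only [hHT_def]
      exact mul_nonneg (mul_nonneg (hI0 _ _) (hI0 _ _)) (hI0 _ _)
    have hHT1 : ∀ y z, HT y z ≤ 1 := fun y z => by
      simp only [hHT_def]
      exact mul_le_one₀ (mul_le_one₀ (hI1 _ _) (hI0 _ _) (hI1 _ _)) (hI0 _ _) (hI1 _ _)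
    have hHV0 : ∀ y z, 0 ≤ HV y z := fun y z => by
      simp only [hHV_def]
      exact mul_nonneg (hI0 _ _) (hI0 _ _)
    have hHV1 : ∀ y z, HV y z ≤ 1 := fun y z => by
      simp only [hHV_def]
      exact mul_le_one₀ (hI1 _ _) (hI0 _ _) (hI1 _ _)
    have hTlim := uslln P X hXmeas hindep μ hlaw HT hHTmeas hHT0 hHT1
    have hVlim := uslln P X hXmeas hindep μ hlaw HV hHVmeas hHV0 hHV1
    have hθT : (∫ y, ∫ z, HT y z ∂μ ∂μ) = ET x := by rw [hET x]
    have hθV : (∫ y, ∫ z, HV y z ∂μ ∂μ) = ED x * ED x := by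
      have h1 : ∀ y : ℝ, ∫ z, HV y z ∂μ = I x y * ED x := by
        intro y
        simp only [hHV_def]
        rw [MeasureTheory.integral_const_mul]
        rw [hED x]
      simp_rw [h1]
      rw [integral_mul_const]
      rw [hED x]
    rw [hθT] at hTlim
    rw [hθV] at hVlim
    rcases eq_or_lt_of_le hd0 with hd | hd
    · -- ED x = 0
      have hAmeas : MeasurableSet {y : ℝ | fc x y ∈ B} :=
        (hfcmeas.comp (measurable_const.prodMk measurable_id)) hB
      have hA0 : μ {y : ℝ | fc x y ∈ B} = 0 := by
        have hind : (fun y => if fc x y ∈ B then (1:ℝ) else 0)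
            = Set.indicator {y : ℝ | fc x y ∈ B} (fun _ => (1:ℝ)) := by
          funext y
          rw [Set.indicator_apply]
          rfl
        have h2 : ED x = (μ {y : ℝ | fc x y ∈ B}).toReal := by
          rw [hED x, hind, integral_indicator_const _ hAmeas]
          simp [Measure.real]
        rw [← hd] at h2
        rcases (ENNReal.toReal_eq_zero_iff _).mp h2.symm with h | h
        · exact h
        · exact absurd h (measure_ne_top μ _)
      have hae : ∀ᵐ ω ∂P, ∀ j : ℕ, fc x (X (j+1) ω) ∉ B := by
        rw [ae_all_iff]
        intro j
        rw [ae_iff]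
        have hset : {ω | ¬ fc x (X (j+1) ω) ∉ B} = X (j+1) ⁻¹' {y | fc x y ∈ B} := by
          ext ω
          simp [Set.mem_preimage]
        rw [hset, ← Measure.map_apply (hXmeas (j+1)) hAmeas, hlaw (j+1)]
        exact hA0
      filter_upwards [hae] with ω hω
      have hVzero : ∀ n, Vt n (x, Y ω) = 0 := by
        intro n
        simp only [hVt_def]
        refine Finset.sum_eq_zero fun j hj => Finset.sum_eq_zero fun k hk => ?_
        have h1 : I x (Y ω (j-1)) = 0 := by
          simp only [hI_def, hY_def]
          exact if_neg (hω (j-1))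
        rw [h1, zero_mul]
      have hCw : ∀ n, Ct n (x, Y ω) = w := by
        intro n
        simp only [hCt_def]
        rw [hVzero n, if_neg (by norm_num)]
      have hLw : Lf (x, Y ω) = w := by
        simp only [hLf_def]
        rw [if_neg (by rw [← hd]; exact lt_irrefl 0)]
      show (x, Y ω) ∈ G
      simp only [hG_def, Set.mem_setOf_eq, hLw]
      exact tendsto_const_nhds.congr fun n => (hCw n).symm
    · -- 0 < ED x
      have hsq : Tendsto (fun n : ℕ => ((n:ℝ))^2) atTop atTop :=
        (tendsto_pow_atTop two_ne_zero).comp tendsto_natCast_atTop_atTop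
      filter_upwards [hTlim, hVlim] with ω hTω hVω
      have hYX : ∀ m : ℕ, 1 ≤ m → Y ω (m-1) = X m ω := by
        intro m hm
        have h1 : m - 1 + 1 = m := by omega
        simp only [hY_def]
        rw [h1]
      have hTt_eq : ∀ n, Tt n (x, Y ω)
          = ∑ j ∈ Finset.Ioo 0 n, ∑ k ∈ Finset.Ioo j n, HT (X j ω) (X k ω) := by
        intro n
        simp only [hTt_def]
        refine Finset.sum_congr rfl fun j hj => Finset.sum_congr rfl fun k hk => ?_
        simp only [Finset.mem_Ioo] at hj hk
        rw [hYX j (by omega), hYX k (by omega)]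
      have hVt_eq : ∀ n, Vt n (x, Y ω)
          = ∑ j ∈ Finset.Ioo 0 n, ∑ k ∈ Finset.Ioo j n, HV (X j ω) (X k ω) := by
        intro n
        simp only [hVt_def]
        refine Finset.sum_congr rfl fun j hj => Finset.sum_congr rfl fun k hk => ?_
        simp only [Finset.mem_Ioo] at hj hk
        rw [hYX j (by omega), hYX k (by omega)]
      have hT2 : Tendsto (fun n => Tt n (x, Y ω) / (n:ℝ)^2) atTop (nhds (ET x / 2)) := by
        refine hTω.congr fun n => ?_
        rw [hTt_eq n]
      have hV2 : Tendsto (fun n => Vt n (x, Y ω) / (n:ℝ)^2) atTop (nhds (ED x * ED x / 2)) := by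
        refine hVω.congr fun n => ?_
        rw [hVt_eq n]
      have hhalfpos : 0 < ED x * ED x / 2 := div_pos (mul_pos hd hd) two_pos
      have hVinf : Tendsto (fun n => Vt n (x, Y ω)) atTop atTop := by
        refine Tendsto.congr' ?_ (Tendsto.pos_mul_atTop hhalfpos hV2 hsq)
        filter_upwards [eventually_ge_atTop 1] with n hn
        have hne : ((n:ℝ))^2 ≠ 0 := by
          have : (0:ℝ) < n := by exact_mod_cast hn
          positivity
        rw [div_mul_cancel₀ _ hne]
      have hev1 : ∀ᶠ n in atTop, 1 ≤ Vt n (x, Y ω) := hVinf.eventually_ge_atTop 1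
      have hlimeq : (ET x / 2) / (ED x * ED x / 2) = ET x / ED x ^ 2 := by
        rw [sq, div_div_div_comm, div_self (by norm_num : (2:ℝ) ≠ 0), div_one]
      have hdiv := hT2.div hV2 (ne_of_gt hhalfpos)
      rw [hlimeq] at hdiv
      have htends : Tendsto (fun n => Tt n (x, Y ω) / Vt n (x, Y ω)) atTop
          (nhds (ET x / ED x ^ 2)) := by
        refine Tendsto.congr' ?_ hdiv
        filter_upwards [eventually_ge_atTop 1] with n hn
        have hne : ((n:ℝ))^2 ≠ 0 := by
          have : (0:ℝ) < n := by exact_mod_cast hn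
          positivity
        show Tt n (x, Y ω) / (n:ℝ)^2 / (Vt n (x, Y ω) / (n:ℝ)^2) = _
        rw [div_div_div_comm, div_self hne, div_one]
      show (x, Y ω) ∈ G
      simp only [hG_def, Set.mem_setOf_eq, hCt_def, hLf_def]
      rw [if_pos hd]
      refine Tendsto.congr' ?_ htends
      filter_upwards [hev1] with n hn
      rw [if_pos hn]
  -- assemble
  have hprodnull : (μ.prod ν) Gᶜ = 0 := by
    rw [Measure.measure_prod_null hGmeas.compl]
    refine Filter.Eventually.of_forall (fun x => ?_)
    have hsecmeas : MeasurableSet {z : ℕ → ℝ | (x, z) ∈ G} :=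
      hGmeas.preimage measurable_prodMk_left
    have h := (ae_map_iff hYmeas.aemeasurable hsecmeas).mpr (hsection x)
    have h2 : (P.map Y) {z : ℕ → ℝ | ¬ (x, z) ∈ G} = 0 := by
      have := ae_iff.mp h
      exact this
    exact h2
  have hG : ∀ᵐ p ∂(μ.prod ν), p ∈ G := by
    rw [ae_iff]
    have : {p : ℝ × (ℕ → ℝ) | ¬ p ∈ G} = Gᶜ := rfl
    rw [this]
    exact hprodnull
  rw [← hmapΦ] at hG
  have hfinal := ae_of_ae_map ((hXmeas 0).prodMk hYmeas).aemeasurable hG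
  filter_upwards [hfinal] with ω hω
  have hYX : ∀ j : ℕ, 1 ≤ j → Y ω (j-1) = X j ω := by
    intro j hj
    have : j - 1 + 1 = j := by omega
    simp only [hY_def]
    rw [this]
  have hTeq : ∀ n, Tt n (X 0 ω, Y ω) = T n ω := by
    intro n
    rw [hT n ω]
    simp only [hTt_def]
    refine Finset.sum_congr rfl fun j hj => Finset.sum_congr rfl fun k hk => ?_
    simp only [Finset.mem_Ioo] at hj hk
    rw [hYX j (by omega), hYX k (by omega)]
  have hVeq : ∀ n, Vt n (X 0 ω, Y ω) = V n ω := by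
    intro n
    rw [hV n ω]
    simp only [hVt_def]
    refine Finset.sum_congr rfl fun j hj => Finset.sum_congr rfl fun k hk => ?_
    simp only [Finset.mem_Ioo] at hj hk
    rw [hYX j (by omega), hYX k (by omega)]
  have hfun : (fun n : ℕ => if 1 ≤ V n ω then T n ω / V n ω else w)
      = fun n => Ct n (X 0 ω, Y ω) := by
    funext n
    simp only [hCt_def, hTeq n, hVeq n]
  rw [hfun]
  have hLeq : Lf (X 0 ω, Y ω)
      = (if 0 < ED (X 0 ω) then ET (X 0 ω) / ED (X 0 ω) ^ 2 else w) := by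
    simp only [hLf_def]
  rw [← hLeq]
  exact hω
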